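/- Let Q be a prime power, K = F_Q, L = F_{Q^2}, and let E be an extension field of L carrying the Frobenius S: z ↦ z^Q. Let f(y) ∈ K[y] be monic irreducible of degree δ such that f(x^2) ∈ K[x] splits over K into two distinct irreducibles g_1, g_2 and f splits over L into two distinct irreducibles h_1, h_2. Suppose w ∈ E is annihilated by f(S^2)^{p^a} and its Q^2-order (as L[y]-module via S^2) equals h_1^α · h_2^β with β < α ≤ p^a. Then the Q-order of w (as K[x]-module via S) equals f(x^2)^α. -/

import Mathlib

open Polynomial

noncomputable section

/-- The action of a polynomial `g ∈ F[x]` on `z ∈ E` through `x ↦ T`, where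
`T : z ↦ z^Q` (`Q = |F|`): `g(T)(z) = Σᵢ aᵢ • z^{Q^i}`. -/
def polyAct {F E : Type*} [CommSemiring F] [CommRing E] [Algebra F E]
    (Q : ℕ) (g : F[X]) (z : E) : E :=
  g.sum fun i a => a • z ^ Q ^ i

/-- `g` is the `F`-order of `w` (w.r.t. the `Q`-power Frobenius): the monic
generator of the annihilator of `w` in `F[x]`. -/
def IsPolyOrd {F E : Type*} [CommSemiring F] [CommRing E] [Algebra F E]
    (Q : ℕ) (g : F[X]) (w : E) : Prop :=
  g.Monic ∧ polyAct Q g w = 0 ∧ ∀ f : F[X], polyAct Q f w = 0 → g ∣ f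

namespace Stmt9Aux

variable {F E : Type*} [Field F] [Field E] [Algebra F E]

lemma polyAct_monomial (Q : ℕ) (n : ℕ) (a : F) (z : E) :
    polyAct Q (monomial n a) z = a • z ^ Q ^ n := by
  rw [polyAct, Polynomial.sum_monomial_index]
  simp

lemma polyAct_X (Q : ℕ) (z : E) : polyAct Q (X : F[X]) z = z ^ Q := by
  rw [← Polynomial.monomial_one_one_eq_X, polyAct_monomial]
  simp

lemma polyAct_add (Q : ℕ) (u v : F[X]) (z : E) :
    polyAct Q (u + v) z = polyAct Q u z + polyAct Q v z := by
  unfold polyAct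
  apply Polynomial.sum_add_index <;> intros <;> simp [add_smul]

lemma polyAct_zero_poly (Q : ℕ) (z : E) : polyAct Q (0 : F[X]) z = 0 := by
  unfold polyAct
  exact Polynomial.sum_zero_index _

lemma polyAct_zero_elem (Q : ℕ) (hQ : Q ≠ 0) (g : F[X]) :
    polyAct Q g (0 : E) = 0 := by
  unfold polyAct
  rw [Polynomial.sum_def]
  apply Finset.sum_eq_zero
  intro i _
  rw [zero_pow (pow_ne_zero i hQ), smul_zero]

def frobLin (Q : ℕ) (hadd : ∀ x y : E, (x + y) ^ Q = x ^ Q + y ^ Q)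
    (hsmul : ∀ (c : F) (x : E), (c • x) ^ Q = c • x ^ Q) : Module.End F E where
  toFun x := x ^ Q
  map_add' := hadd
  map_smul' c x := by simpa using hsmul c x

lemma frobLin_pow (Q : ℕ) (hadd : ∀ x y : E, (x + y) ^ Q = x ^ Q + y ^ Q)
    (hsmul : ∀ (c : F) (x : E), (c • x) ^ Q = c • x ^ Q) (e : ℕ) (z : E) :
    ((frobLin Q hadd hsmul) ^ e) z = z ^ Q ^ e := by
  induction e generalizing z with
  | zero => simp
  | succ e ih =>
      rw [pow_succ, Module.End.mul_apply]
      show ((frobLin Q hadd hsmul) ^ e) (z ^ Q) = _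
      rw [ih, ← pow_mul, ← pow_succ']

lemma polyAct_eq_aeval (Q : ℕ) (hadd : ∀ x y : E, (x + y) ^ Q = x ^ Q + y ^ Q)
    (hsmul : ∀ (c : F) (x : E), (c • x) ^ Q = c • x ^ Q) (g : F[X]) (z : E) :
    polyAct Q g z = Polynomial.aeval (frobLin (F := F) (E := E) Q hadd hsmul) g z := by
  rw [aeval_def, eval₂_eq_sum, polyAct, Polynomial.sum_def, Polynomial.sum_def,
    LinearMap.coe_sum, Finset.sum_apply]
  apply Finset.sum_congr rfl
  intro i _
  rw [Module.End.mul_apply, Module.algebraMap_end_apply, frobLin_pow]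

lemma polyAct_mul (Q : ℕ) (hadd : ∀ x y : E, (x + y) ^ Q = x ^ Q + y ^ Q)
    (hsmul : ∀ (c : F) (x : E), (c • x) ^ Q = c • x ^ Q) (u v : F[X]) (z : E) :
    polyAct Q (u * v) z = polyAct Q u (polyAct Q v z) := by
  rw [polyAct_eq_aeval Q hadd hsmul, polyAct_eq_aeval Q hadd hsmul v,
    polyAct_eq_aeval Q hadd hsmul u, map_mul, Module.End.mul_apply]

lemma polyAct_neg_elem (Q : ℕ) (hadd : ∀ x y : E, (x + y) ^ Q = x ^ Q + y ^ Q)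
    (hsmul : ∀ (c : F) (x : E), (c • x) ^ Q = c • x ^ Q) (g : F[X]) (z : E) :
    polyAct Q g (-z) = - polyAct Q g z := by
  rw [polyAct_eq_aeval Q hadd hsmul, polyAct_eq_aeval Q hadd hsmul g z, map_neg]

/-- parity decomposition -/
lemma exists_even_odd (q : F[X]) :
    ∃ a b : F[X], q = expand F 2 a + X * expand F 2 b := by
  induction q using Polynomial.induction_on' with
  | add p r hp hr =>
      obtain ⟨a, b, rfl⟩ := hp
      obtain ⟨c, d, rfl⟩ := hr
      exact ⟨a + c, b + d, by rw [map_add, map_add]; ring⟩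
  | monomial n c =>
      rcases Nat.even_or_odd n with ⟨m, rfl⟩ | ⟨m, rfl⟩
      · refine ⟨monomial m c, 0, ?_⟩
        rw [map_zero, mul_zero, add_zero, expand_monomial, mul_two]
      · refine ⟨0, monomial m c, ?_⟩
        rw [map_zero, zero_add, expand_monomial, X_mul_monomial, mul_two, two_mul]

/-- bridge: expand over K acts like map over L -/
lemma polyAct_expand {K L E : Type*} [Field K] [Field L] [Field E]
    [Algebra K L] [Algebra K E] [Algebra L E] [IsScalarTower K L E]
    (Q : ℕ) (u : K[X]) (z : E) :
    polyAct Q (expand K 2 u) z = polyAct (Q ^ 2) (u.map (algebraMap K L)) z := by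
  induction u using Polynomial.induction_on' with
  | add p r hp hr => simp only [map_add, Polynomial.map_add, polyAct_add, hp, hr]
  | monomial n c =>
      rw [expand_monomial, Polynomial.map_monomial, polyAct_monomial, polyAct_monomial,
        algebraMap_smul]
      congr 1
      rw [← pow_mul, mul_comm n 2]

/-- conjugation: pulling a Q-th power out of an L-polynomial action costs a
coefficientwise Frobenius. -/
lemma polyAct_conj {L E : Type*} [Field L] [Field E] [Algebra L E]
    (Q QL : ℕ) (φ : L →+* L)
    (hadd : ∀ x y : E, (x + y) ^ Q = x ^ Q + y ^ Q)
    (hconj : ∀ (b : L) (z : E), (φ b • z) ^ Q = b • z ^ Q)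
    (c : L[X]) (v : E) :
    polyAct QL c (v ^ Q) = (polyAct QL (c.map φ) v) ^ Q := by
  induction c using Polynomial.induction_on' with
  | add p r hp hr =>
      simp only [Polynomial.map_add, polyAct_add, hp, hr, hadd]
  | monomial n b =>
      rw [Polynomial.map_monomial, polyAct_monomial, polyAct_monomial, ← pow_mul,
        mul_comm Q (QL ^ n), pow_mul, ← hconj]

lemma fixed_mem_range {K L : Type*} [Field K] [Fintype K] [Field L] [Fintype L]
    [Algebra K L] (Q : ℕ) (hQ : Q = Fintype.card K) (x : L) (hx : x ^ Q = x) :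
    x ∈ Set.range (algebraMap K L) := by
  classical
  have hQ2 : 2 ≤ Q := by rw [hQ]; exact Fintype.one_lt_card
  set P : L[X] := X ^ Q - X with hP
  have hPne : P ≠ 0 := by
    intro h
    have : P.coeff Q = 1 := by
      rw [hP, coeff_sub, coeff_X_pow, if_pos rfl, coeff_X, if_neg (by omega), sub_zero]
    rw [h, coeff_zero] at this
    exact one_ne_zero this.symm
  have hdeg : P.natDegree ≤ Q := by
    apply Polynomial.natDegree_sub_le_iff_left ?_ |>.mpr ?_
    · exact (natDegree_X_le).trans (by omega)
    · exact natDegree_X_pow_le _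
  set Kset : Finset L := Finset.univ.image (algebraMap K L) with hKset
  set Fix : Finset L := Finset.univ.filter (fun y : L => y ^ Q = y) with hFix
  have hKcard : Kset.card = Q := by
    rw [hKset, Finset.card_image_of_injective _ (algebraMap K L).injective,
      Finset.card_univ, hQ]
  have hsub : Kset ⊆ Fix := by
    intro y hy
    rw [hKset, Finset.mem_image] at hy
    obtain ⟨k, -, rfl⟩ := hy
    rw [hFix, Finset.mem_filter]
    refine ⟨Finset.mem_univ _, ?_⟩
    rw [← map_pow, hQ, FiniteField.pow_card]
  have hFixsub : Fix ⊆ P.roots.toFinset := by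
    intro y hy
    rw [hFix, Finset.mem_filter] at hy
    rw [Multiset.mem_toFinset, mem_roots hPne]
    simp [hP, IsRoot, hy.2, sub_eq_zero]
  have hFixcard : Fix.card ≤ Q := by
    calc Fix.card ≤ P.roots.toFinset.card := Finset.card_le_card hFixsub
      _ ≤ Multiset.card P.roots := Multiset.toFinset_card_le _
      _ ≤ P.natDegree := Polynomial.card_roots' P
      _ ≤ Q := hdeg
  have heq : Kset = Fix :=
    Finset.eq_of_subset_of_card_le hsub (by omega)
  have hxF : x ∈ Fix := by rw [hFix, Finset.mem_filter]; exact ⟨Finset.mem_univ _, hx⟩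
  rw [← heq, hKset, Finset.mem_image] at hxF
  obtain ⟨k, -, rfl⟩ := hxF
  exact ⟨k, rfl⟩

end Stmt9Aux

open Stmt9Aux in
theorem stmt_9 (K L E : Type*) [Field K] [Fintype K] [Field L] [Fintype L]
    [Field E] [Fintype E] [Algebra K L] [Algebra K E] [Algebra L E]
    [IsScalarTower K L E]
    (p : ℕ) [Fact p.Prime] [CharP K p]
    (Q : ℕ) (hQ : Q = Fintype.card K) (hL : Fintype.card L = Q ^ 2)
    (f : K[X]) (hf : f.Monic) (hfirr : Irreducible f)
    (g₁ g₂ : K[X]) (hg : expand K 2 f = g₁ * g₂)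
    (hg₁ : g₁.Monic) (hg₂ : g₂.Monic)
    (hg₁irr : Irreducible g₁) (hg₂irr : Irreducible g₂) (hgne : g₁ ≠ g₂)
    (h₁ h₂ : L[X]) (hh : f.map (algebraMap K L) = h₁ * h₂)
    (hh₁ : h₁.Monic) (hh₂ : h₂.Monic)
    (hh₁irr : Irreducible h₁) (hh₂irr : Irreducible h₂) (hhne : h₁ ≠ h₂)
    (a α β : ℕ) (hβα : β < α) (hα : α ≤ p ^ a)
    (w : E) (hann : polyAct Q ((expand K 2 f) ^ p ^ a) w = 0)
    (hord : IsPolyOrd (Q ^ 2) (h₁ ^ α * h₂ ^ β) w) :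
    IsPolyOrd Q ((expand K 2 f) ^ α) w := by
  classical
  obtain ⟨s, -, hps⟩ := FiniteField.card K p
  haveI : CharP L p := charP_of_injective_algebraMap (algebraMap K L).injective p
  haveI : CharP E p := charP_of_injective_algebraMap (algebraMap K E).injective p
  have hppos : 0 < p := (Fact.out (p := p.Prime)).pos
  have hQp : Q = p ^ (s : ℕ) := by rw [hQ, hps]
  have hQ0 : Q ≠ 0 := by rw [hQp]; exact pow_ne_zero _ hppos.ne'
  have hQ20 : Q ^ 2 ≠ 0 := pow_ne_zero _ hQ0
  -- Frobenius facts
  have hfrobE : ∀ z : E, z ^ Q = iterateFrobenius E p s z := fun z => by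
    rw [iterateFrobenius_def, hQp]
  have haddE : ∀ x y : E, (x + y) ^ Q = x ^ Q + y ^ Q := fun x y => by
    rw [hfrobE, hfrobE, hfrobE, map_add]
  have haddE2 : ∀ x y : E, (x + y) ^ Q ^ 2 = x ^ Q ^ 2 + y ^ Q ^ 2 := fun x y => by
    rw [sq, pow_mul, pow_mul, pow_mul, haddE, haddE]
  have hsmulK : ∀ (c : K) (x : E), (c • x) ^ Q = c • x ^ Q := fun c x => by
    have hc : c ^ Q = c := by rw [hQ]; exact FiniteField.pow_card c
    rw [_root_.smul_pow, hc]
  have hsmulL : ∀ (c : L) (x : E), (c • x) ^ Q ^ 2 = c • x ^ Q ^ 2 := fun c x => by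
    have hc : c ^ Q ^ 2 = c := by rw [← hL]; exact FiniteField.pow_card c
    rw [_root_.smul_pow, hc]
  -- the Frobenius of L over K
  set φ : L →+* L := iterateFrobenius L p s with hφdef
  have hφ : ∀ b : L, φ b = b ^ Q := fun b => by
    rw [hφdef, iterateFrobenius_def, hQp]
  have hconjφ : ∀ (b : L) (z : E), (φ b • z) ^ Q = b • z ^ Q := fun b z => by
    have hb : (φ b) ^ Q = b := by
      rw [hφ, ← pow_mul, ← sq, ← hL]; exact FiniteField.pow_card b
    rw [_root_.smul_pow, hb]
  have hφalg : φ.comp (algebraMap K L) = algebraMap K L := RingHom.ext fun k => by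
    rw [RingHom.comp_apply, hφ, ← map_pow, hQ, FiniteField.pow_card]
  have hφφ : φ.comp φ = RingHom.id L := RingHom.ext fun b => by
    rw [RingHom.comp_apply, hφ, hφ, ← pow_mul, ← sq, ← hL, RingHom.id_apply,
      FiniteField.pow_card]
  have hmapφφ : ∀ c : L[X], (c.map φ).map φ = c := fun c => by
    rw [map_map, hφφ, Polynomial.map_id]
  have hdvdφ : ∀ x y : L[X], x ∣ y ↔ x.map φ ∣ y.map φ := fun x y =>
    ⟨fun h => Polynomial.map_dvd φ h, fun h => by
      have := Polynomial.map_dvd φ h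
      rwa [hmapφφ, hmapφφ] at this⟩
  -- abbreviations
  have mulK := polyAct_mul (F := K) (E := E) Q haddE hsmulK
  have mulL := polyAct_mul (F := L) (E := E) (Q ^ 2) haddE2 hsmulL
  have zeroL := polyAct_zero_elem (F := L) (E := E) (Q ^ 2) hQ20
  have negL := polyAct_neg_elem (F := L) (E := E) (Q ^ 2) haddE2 hsmulL
  set n : L[X] := h₁ ^ α * h₂ ^ β with hn
  have annIff : ∀ c : L[X], polyAct (Q ^ 2) c w = 0 ↔ n ∣ c := by
    intro c
    constructor
    · exact hord.2.2 c
    · rintro ⟨d, rfl⟩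
      rw [mul_comm, mulL, hord.2.1, zeroL]
  -- the swap φ(h₁) = h₂
  have hprodφ : h₁.map φ * h₂.map φ = h₁ * h₂ := by
    rw [← Polynomial.map_mul, ← hh, map_map, hφalg, hh]
  have hinj : Function.Injective (fun q : K[X] => q.map (algebraMap K L)) :=
    fun x y hxy => Polynomial.map_injective _ (algebraMap K L).injective hxy
  have hbij : Function.Bijective φ := Finite.injective_iff_bijective.mp φ.injective
  have hirrφ : ∀ c : L[X], Irreducible c → Irreducible (c.map φ) := by
    intro c hc
    have : c.map φ = (Polynomial.mapEquiv (RingEquiv.ofBijective φ hbij)) c := by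
      rw [Polynomial.mapEquiv_apply]
      congr 1
    rw [this]
    exact (MulEquiv.irreducible_iff _).mpr hc
  have hφh₁ : h₁.map φ = h₂ := by
    have hmono1 : (h₁.map φ).Monic := hh₁.map φ
    have hirr1 : Irreducible (h₁.map φ) := hirrφ h₁ hh₁irr
    have hne : h₁.map φ ≠ h₁ := by
      intro hfix
      have hfix2 : h₂.map φ = h₂ := by
        apply mul_left_cancel₀ hh₁.ne_zero
        calc h₁ * h₂.map φ = h₁.map φ * h₂.map φ := by rw [hfix]
          _ = h₁ * h₂ := hprodφ
      have hlift1 : ∃ q : K[X], q.map (algebraMap K L) = h₁ := by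
        rw [← Polynomial.mem_lifts]
        rw [Polynomial.lifts_iff_coeff_lifts]
        intro i
        apply fixed_mem_range Q hQ
        have := congrArg (fun q : L[X] => q.coeff i) hfix
        simpa [Polynomial.coeff_map, hφ] using this
      have hlift2 : ∃ q : K[X], q.map (algebraMap K L) = h₂ := by
        rw [← Polynomial.mem_lifts]
        rw [Polynomial.lifts_iff_coeff_lifts]
        intro i
        apply fixed_mem_range Q hQ
        have := congrArg (fun q : L[X] => q.coeff i) hfix2
        simpa [Polynomial.coeff_map, hφ] using this
      obtain ⟨f₁, hf₁⟩ := hlift1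
      obtain ⟨f₂, hf₂⟩ := hlift2
      have hf12 : f₁ * f₂ = f := by
        apply hinj
        show (f₁ * f₂).map (algebraMap K L) = f.map (algebraMap K L)
        rw [Polynomial.map_mul, hf₁, hf₂, hh]
      rcases hfirr.isUnit_or_isUnit hf12.symm with hu | hu
      · refine hh₁irr.not_isUnit ?_
        rw [← hf₁]
        exact IsUnit.map (Polynomial.mapRingHom (algebraMap K L)) hu
      · refine hh₂irr.not_isUnit ?_
        rw [← hf₂]
        exact IsUnit.map (Polynomial.mapRingHom (algebraMap K L)) hu
    have hdvd : h₁.map φ ∣ h₁ * h₂ := ⟨h₂.map φ, hprodφ.symm⟩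
    rcases hirr1.prime.2.2 _ _ hdvd with hd | hd
    · exact absurd (eq_of_monic_of_associated hmono1 hh₁
        (hirr1.associated_of_dvd hh₁irr hd)) hne
    · exact eq_of_monic_of_associated hmono1 hh₂ (hirr1.associated_of_dvd hh₂irr hd)
  have hφh₂ : h₂.map φ = h₁ := by
    rw [← hφh₁, hmapφφ]
  -- basic coprimality
  have hndvdh : ¬ h₁ ∣ h₂ := fun hd =>
    hhne (eq_of_monic_of_associated hh₁ hh₂ (hh₁irr.associated_of_dvd hh₂irr hd))
  have hndvdh' : ¬ h₂ ∣ h₁ := fun hd =>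
    hhne (eq_of_monic_of_associated hh₂ hh₁ (hh₂irr.associated_of_dvd hh₁irr hd)).symm
  have hp₁ : Prime h₁ := hh₁irr.prime
  have hp₂ : Prime h₂ := hh₂irr.prime
  have charn : ∀ c : L[X], n ∣ c ↔
      ((α : ℕ∞) ≤ emultiplicity h₁ c ∧ (β : ℕ∞) ≤ emultiplicity h₂ c) := by
    intro c
    rw [← pow_dvd_iff_le_emultiplicity, ← pow_dvd_iff_le_emultiplicity]
    constructor
    · intro hd
      exact ⟨(dvd_mul_right _ _).trans hd, (dvd_mul_left _ _).trans hd⟩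
    · rintro ⟨d1, d2⟩
      exact (((hh₁irr.coprime_iff_not_dvd).mpr hndvdh).pow).mul_dvd d1 d2
  have hem1 : ∀ (u t : ℕ) (D : L[X]),
      emultiplicity h₁ (h₁ ^ u * h₂ ^ t * D) = u + emultiplicity h₁ D := by
    intro u t D
    rw [emultiplicity_mul hp₁, emultiplicity_mul hp₁,
      emultiplicity_pow_self_of_prime hp₁,
      emultiplicity_eq_zero.mpr (fun hd => hndvdh (hp₁.dvd_of_dvd_pow hd)), add_zero]
  have hem2 : ∀ (u t : ℕ) (D : L[X]),
      emultiplicity h₂ (h₁ ^ u * h₂ ^ t * D) = t + emultiplicity h₂ D := by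
    intro u t D
    rw [emultiplicity_mul hp₂, emultiplicity_mul hp₂,
      emultiplicity_pow_self_of_prime hp₂,
      emultiplicity_eq_zero.mpr (fun hd => hndvdh' (hp₂.dvd_of_dvd_pow hd)), zero_add]
  -- goal components
  refine ⟨(hf.expand (by norm_num)).pow _, ?_, ?_⟩
  · -- annihilation
    rw [← map_pow, polyAct_expand (L := L)]
    have e2 : (f ^ α).map (algebraMap K L) = n * h₂ ^ (α - β) := by
      rw [Polynomial.map_pow, hh, mul_pow, hn, mul_assoc, ← pow_add]
      congr 2
      omega
    rw [e2, mul_comm, mulL, hord.2.1, zeroL]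
  · -- minimality
    intro q hq
    obtain ⟨qe, qo, rfl⟩ := exists_even_odd q
    set M : L[X] := qe.map (algebraMap K L) with hM
    set N : L[X] := qo.map (algebraMap K L) with hN
    have hMinv : M.map φ = M := by rw [hM, map_map, hφalg]
    have hNinv : N.map φ = N := by rw [hN, map_map, hφalg]
    have hkey : polyAct (Q ^ 2) M w = - (polyAct (Q ^ 2) N w) ^ Q := by
      apply eq_neg_of_add_eq_zero_left
      rw [polyAct_add, mulK, polyAct_X, polyAct_expand (L := L), polyAct_expand (L := L)] at hq
      exact hq
    have master : ∀ c : L[X], n ∣ c * M ↔ n ∣ (c.map φ) * N := by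
      intro c
      rw [← annIff, ← annIff, mulL, mulL, hkey, negL,
        polyAct_conj Q (Q ^ 2) φ haddE hconjφ, neg_eq_zero, pow_eq_zero_iff hQ0]
    -- transfer between h₁- and h₂-divisibility for φ-invariant polys
    have htrans : ∀ (k : ℕ) (D : L[X]), D.map φ = D → (h₁ ^ k ∣ D ↔ h₂ ^ k ∣ D) := by
      intro k D hD
      rw [hdvdφ (h₁ ^ k) D, Polynomial.map_pow, hφh₁, hD]
    suffices hMN : h₁ ^ α ∣ M ∧ h₁ ^ α ∣ N by
      have h2M : h₂ ^ α ∣ M := (htrans α M hMinv).mp hMN.1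
      have h2N : h₂ ^ α ∣ N := (htrans α N hNinv).mp hMN.2
      have cop : IsCoprime (h₁ ^ α) (h₂ ^ α) :=
        ((hh₁irr.coprime_iff_not_dvd).mpr hndvdh).pow
      have hM' : (h₁ * h₂) ^ α ∣ M := by rw [mul_pow]; exact cop.mul_dvd hMN.1 h2M
      have hN' : (h₁ * h₂) ^ α ∣ N := by rw [mul_pow]; exact cop.mul_dvd hMN.2 h2N
      have hfqe : f ^ α ∣ qe := by
        rw [← Polynomial.map_dvd_map (algebraMap K L) (algebraMap K L).injective
          (hf.pow α), Polynomial.map_pow, hh]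
        exact hM'
      have hfqo : f ^ α ∣ qo := by
        rw [← Polynomial.map_dvd_map (algebraMap K L) (algebraMap K L).injective
          (hf.pow α), Polynomial.map_pow, hh]
        exact hN'
      have d1 : (expand K 2 f) ^ α ∣ expand K 2 qe := by
        rw [← map_pow]; exact _root_.map_dvd (expand K 2) hfqe
      have d2 : (expand K 2 f) ^ α ∣ X * expand K 2 qo :=
        Dvd.dvd.mul_left (by rw [← map_pow]; exact _root_.map_dvd (expand K 2) hfqo) X
      exact dvd_add d1 d2
    by_cases hM0 : M = 0
    · have hMact : polyAct (Q ^ 2) M w = 0 := by rw [hM0]; exact polyAct_zero_poly _ _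
      have hv : polyAct (Q ^ 2) N w = 0 := by
        rw [hMact] at hkey
        have : (polyAct (Q ^ 2) N w) ^ Q = 0 := by
          rw [← neg_eq_zero, ← hkey]
        exact (pow_eq_zero_iff hQ0).mp this
      have hnN : n ∣ N := (annIff N).mp hv
      exact ⟨hM0 ▸ dvd_zero _, (dvd_mul_right _ _).trans hnN⟩
    by_cases hN0 : N = 0
    · have hNact : polyAct (Q ^ 2) N w = 0 := by rw [hN0]; exact polyAct_zero_poly _ _
      have hu : polyAct (Q ^ 2) M w = 0 := by
        rw [hkey, hNact, zero_pow hQ0, neg_zero]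
      have hnM : n ∣ M := (annIff M).mp hu
      exact ⟨(dvd_mul_right _ _).trans hnM, hN0 ▸ dvd_zero _⟩
    -- main case
    have finA : FiniteMultiplicity h₁ M := FiniteMultiplicity.of_prime_left hp₁ hM0
    have finC : FiniteMultiplicity h₁ N := FiniteMultiplicity.of_prime_left hp₁ hN0
    set A : ℕ := multiplicity h₁ M with hA
    set C : ℕ := multiplicity h₁ N with hC
    have hemA : emultiplicity h₁ M = (A : ℕ∞) := finA.emultiplicity_eq_multiplicity
    have hemC : emultiplicity h₁ N = (C : ℕ∞) := finC.emultiplicity_eq_multiplicity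
    -- h₂-multiplicities agree with h₁-multiplicities
    have finA2 : FiniteMultiplicity h₂ M := FiniteMultiplicity.of_prime_left hp₂ hM0
    have finC2 : FiniteMultiplicity h₂ N := FiniteMultiplicity.of_prime_left hp₂ hN0
    have hemA2 : emultiplicity h₂ M = (A : ℕ∞) := by
      rw [finA2.emultiplicity_eq_multiplicity]
      congr 1
      apply le_antisymm
      · exact finA.le_multiplicity_of_pow_dvd
          ((htrans _ M hMinv).mpr (pow_dvd_of_le_multiplicity le_rfl))
      · exact finA2.le_multiplicity_of_pow_dvd
          ((htrans _ M hMinv).mp (pow_dvd_of_le_multiplicity le_rfl))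
    have hemC2 : emultiplicity h₂ N = (C : ℕ∞) := by
      rw [finC2.emultiplicity_eq_multiplicity]
      congr 1
      apply le_antisymm
      · exact finC.le_multiplicity_of_pow_dvd
          ((htrans _ N hNinv).mpr (pow_dvd_of_le_multiplicity le_rfl))
      · exact finC2.le_multiplicity_of_pow_dvd
          ((htrans _ N hNinv).mp (pow_dvd_of_le_multiplicity le_rfl))
    -- the two master instances
    have inst1 : (α : ℕ∞) ≤ ((β - A : ℕ) : ℕ∞) + C ∧ (β : ℕ∞) ≤ ((α - A : ℕ) : ℕ∞) + C := by
      have hLHS : n ∣ (h₁ ^ (α - A) * h₂ ^ (β - A)) * M := by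
        rw [charn, hem1, hem2, hemA, hemA2]
        constructor
        · exact_mod_cast (by omega : α ≤ (α - A) + A)
        · exact_mod_cast (by omega : β ≤ (β - A) + A)
      have hRHS := (master _).mp hLHS
      rw [Polynomial.map_mul, Polynomial.map_pow, Polynomial.map_pow, hφh₁, hφh₂,
        mul_comm (h₂ ^ (α - A)) (h₁ ^ (β - A)), charn, hem1, hem2, hemC, hemC2] at hRHS
      exact hRHS
    have inst2 : (α : ℕ∞) ≤ ((β - C : ℕ) : ℕ∞) + A ∧ (β : ℕ∞) ≤ ((α - C : ℕ) : ℕ∞) + A := by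
      have hRHS : n ∣ ((h₁ ^ (β - C) * h₂ ^ (α - C)).map φ) * N := by
        rw [Polynomial.map_mul, Polynomial.map_pow, Polynomial.map_pow, hφh₁, hφh₂,
          mul_comm (h₂ ^ (β - C)) (h₁ ^ (α - C)), charn, hem1, hem2, hemC, hemC2]
        constructor
        · exact_mod_cast (by omega : α ≤ (α - C) + C)
        · exact_mod_cast (by omega : β ≤ (β - C) + C)
      have hLHS := (master _).mpr hRHS
      rw [charn, hem1, hem2, hemA, hemA2] at hLHS
      exact hLHS
    have i1 : α ≤ (β - A) + C := by exact_mod_cast inst1.1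
    have i2 : β ≤ (α - A) + C := by exact_mod_cast inst1.2
    have i3 : α ≤ (β - C) + A := by exact_mod_cast inst2.1
    have i4 : β ≤ (α - C) + A := by exact_mod_cast inst2.2
    have hfin : α ≤ A ∧ α ≤ C := by omega
    exact ⟨pow_dvd_of_le_multiplicity (by rw [← hA]; exact hfin.1),
      pow_dvd_of_le_multiplicity (by rw [← hC]; exact hfin.2)⟩

end
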